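/- Let (M,d) be a metric space, n ∈ ℕ, q, Γ > 0, r ∈ [1,∞], and let m be an even positive integer such that for every map g : ℤ_m^n → M one has ∑_{j=1}^n m^{-n} ∑_{x ∈ ℤ_m^n} d(g(x + (m/2)e_j), g(x))^q ≤ Γ^q m^q · 3^{-n} m^{-n} ∑_{ε ∈ {−1,0,1}^n} ∑_{x ∈ ℤ_m^n} d(g(x+ε), g(x))^q. Then for every map f : ℓ_r^n(ℂ) → M and every s > 0, n^{1/q} · ρ̄_f(2s) ≤ Γ · m · ω_f(2π s n^{1/r} / m) (with the convention 1/r = 0 when r = ∞). -/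

import Mathlib

open Metric
open scoped ENNReal NNReal

/-- Exact compression modulus. -/
noncomputable def exactComp {M N : Type*} [PseudoMetricSpace M] [PseudoMetricSpace N]
    (f : M → N) (t : ℝ) : ℝ :=
  sInf {r : ℝ | ∃ x y : M, dist x y = t ∧ dist (f x) (f y) = r}

/-- Coarse map: the expansion modulus is finite for every t. -/
def Coarse {M N : Type*} [PseudoMetricSpace M] [PseudoMetricSpace N] (f : M → N) : Prop :=
  ∀ t : ℝ, ∃ C : ℝ, ∀ x y : M, dist x y ≤ t → dist (f x) (f y) ≤ C

/-- Solvent map. -/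
def Solvent {M N : Type*} [PseudoMetricSpace M] [PseudoMetricSpace N] (f : M → N) : Prop :=
  ∀ n : ℕ, ∃ R : ℝ, 0 < R ∧ ∀ x y : M,
    dist x y ∈ Set.Icc R (R + (n : ℝ)) → (n : ℝ) < dist (f x) (f y)

/-- Almost uncollapsed map. -/
noncomputable def AlmostUncollapsed {M N : Type*} [PseudoMetricSpace M] [PseudoMetricSpace N]
    (f : M → N) : Prop :=
  ∃ t : ℝ, 0 < t ∧ 0 < exactComp f t

/-- Expansion modulus, valued in ℝ≥0∞. -/
noncomputable def eOmega {A M : Type*} [PseudoMetricSpace A] [PseudoMetricSpace M]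
    (f : A → M) (t : ℝ) : ℝ≥0∞ :=
  ⨆ (x : A) (y : A) (_ : dist x y ≤ t), edist (f x) (f y)

/-- Exact compression modulus, valued in ℝ≥0∞. -/
noncomputable def eRhoBar {A M : Type*} [PseudoMetricSpace A] [PseudoMetricSpace M]
    (f : A → M) (t : ℝ) : ℝ≥0∞ :=
  ⨅ (x : A) (y : A) (_ : dist x y = t), edist (f x) (f y)


/-- |exp(iθ) - 1| ≤ |θ| -/
lemma mc_abs_exp_sub_one_le (θ : ℝ) :
    ‖Complex.exp (θ * Complex.I) - 1‖ ≤ |θ| := by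
  have h1 : ‖Complex.exp (θ * Complex.I) - 1‖ ^ 2 = 2 - 2 * Real.cos θ := by
    rw [Complex.sq_norm, Complex.normSq_apply]
    simp only [Complex.sub_re, Complex.sub_im, Complex.exp_ofReal_mul_I_re,
      Complex.exp_ofReal_mul_I_im, Complex.one_re, Complex.one_im]
    nlinarith [Real.sin_sq_add_cos_sq θ]
  have h2 : 1 - θ ^ 2 / 2 ≤ Real.cos θ := Real.one_sub_sq_div_two_le_cos
  nlinarith [norm_nonneg (Complex.exp (θ * Complex.I) - 1),
    abs_nonneg θ, sq_abs θ]

/-- periodicity of exp(2πi·/m) -/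
lemma mc_exp_congr (m : ℕ) (hm : 0 < m) (a b : ℤ) (hdvd : (m : ℤ) ∣ (b - a)) :
    Complex.exp ((2 * Real.pi * a / m : ℝ) * Complex.I)
      = Complex.exp ((2 * Real.pi * b / m : ℝ) * Complex.I) := by
  obtain ⟨t, ht⟩ := hdvd
  have hb : (b : ℝ) = a + m * t := by
    have : b = a + m * t := by linarith [ht]
    exact_mod_cast congrArg (Int.cast : ℤ → ℝ) this
  have hm' : (m : ℝ) ≠ 0 := Nat.cast_ne_zero.mpr hm.ne'
  have : ((2 * Real.pi * b / m : ℝ) : ℂ) * Complex.I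
      = ((2 * Real.pi * a / m : ℝ) : ℂ) * Complex.I + (t : ℂ) * (2 * Real.pi * Complex.I) := by
    have hbC : (b : ℂ) = (a : ℂ) + (m : ℂ) * (t : ℂ) := by exact_mod_cast hb
    have hmC : (m : ℂ) ≠ 0 := Nat.cast_ne_zero.mpr hm.ne'
    push_cast
    rw [hbC]
    field_simp
  rw [this, Complex.exp_add, Complex.exp_int_mul_two_pi_mul_I, mul_one]

/-- the character z ↦ exp(2πi z/m) on ZMod m -/
noncomputable def mcChr (m : ℕ) [NeZero m] (z : ZMod m) : ℂ :=
  Complex.exp ((2 * Real.pi * (z.val : ℝ) / m : ℝ) * Complex.I)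

lemma mcChr_int (m : ℕ) [NeZero m] (k : ℤ) :
    mcChr m (k : ZMod m) = Complex.exp ((2 * Real.pi * k / m : ℝ) * Complex.I) := by
  have hm : 0 < m := Nat.pos_of_ne_zero (NeZero.ne m)
  have hv : (((k : ZMod m)).val : ℤ) = k % m := ZMod.val_intCast k
  have hdvd : (m : ℤ) ∣ (k - (((k : ZMod m)).val : ℤ)) := by
    rw [hv]
    exact Int.dvd_self_sub_of_emod_eq rfl
  have := mc_exp_congr m hm (((k : ZMod m)).val : ℤ) k hdvd
  unfold mcChr
  simpa using this

lemma mcChr_add (m : ℕ) [NeZero m] (z w : ZMod m) :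
    mcChr m (z + w) = mcChr m z * mcChr m w := by
  have hm : 0 < m := Nat.pos_of_ne_zero (NeZero.ne m)
  have hval : (z + w).val = (z.val + w.val) % m := ZMod.val_add z w
  have hdvd : (m : ℤ) ∣ (((z.val + w.val : ℕ) : ℤ) - (((z + w).val : ℕ) : ℤ)) := by
    rw [hval]
    push_cast
    exact Int.dvd_self_sub_of_emod_eq rfl
  have h1 : mcChr m (z + w)
      = Complex.exp ((2 * Real.pi * ((z.val + w.val : ℕ) : ℤ) / m : ℝ) * Complex.I) := by
    have := mc_exp_congr m hm (((z + w).val : ℕ) : ℤ) ((z.val + w.val : ℕ) : ℤ) hdvd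
    unfold mcChr
    simpa using this
  rw [h1]
  unfold mcChr
  rw [← Complex.exp_add]
  congr 1
  have hm' : (m : ℂ) ≠ 0 := Nat.cast_ne_zero.mpr hm.ne'
  push_cast
  field_simp

lemma mcChr_abs (m : ℕ) [NeZero m] (z : ZMod m) : ‖mcChr m z‖ = 1 :=
  Complex.norm_exp_ofReal_mul_I _

lemma mcChr_half (m : ℕ) [NeZero m] (hmeven : Even m) :
    mcChr m ((m / 2 : ℕ) : ZMod m) = -1 := by
  have hm : 0 < m := Nat.pos_of_ne_zero (NeZero.ne m)
  have hv : (((m / 2 : ℕ) : ZMod m)).val = m / 2 :=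
    ZMod.val_natCast_of_lt (Nat.div_lt_self hm one_lt_two)
  unfold mcChr
  rw [hv]
  obtain ⟨k, hk⟩ := hmeven
  have hk' : m / 2 = k := by omega
  have hkpos : 0 < k := by omega
  have hθ : (2 * Real.pi * ((m / 2 : ℕ) : ℝ) / m : ℝ) = Real.pi := by
    rw [hk']
    have : (m : ℝ) = 2 * k := by push_cast [hk]; ring
    rw [this]
    field_simp
  rw [hθ, Complex.exp_pi_mul_I]

lemma mcChr_bound (m : ℕ) [NeZero m] (k : ℤ) (hk : |k| ≤ 1) :
    ‖mcChr m (k : ZMod m) - 1‖ ≤ 2 * Real.pi / m := by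
  have hm : 0 < m := Nat.pos_of_ne_zero (NeZero.ne m)
  rw [mcChr_int]
  refine (mc_abs_exp_sub_one_le _).trans ?_
  have hπ : (0:ℝ) ≤ 2 * Real.pi := by positivity
  have hmR : (0:ℝ) < m := by exact_mod_cast hm
  rw [abs_div, abs_mul, abs_of_nonneg hπ, abs_of_nonneg hmR.le]
  have : |(k:ℝ)| ≤ 1 := by exact_mod_cast hk
  have h2 : 2 * Real.pi * |(k:ℝ)| / m ≤ 2 * Real.pi * 1 / m := by gcongr
  simpa using h2

lemma mc_pilp_norm_le {n : ℕ} (r : ℝ≥0∞) [Fact (1 ≤ r)]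
    (v : PiLp r (fun _ : Fin n => ℂ)) (c : ℝ) (hc : 0 ≤ c) (hv : ∀ i, ‖v i‖ ≤ c) :
    ‖v‖ ≤ c * (n : ℝ) ^ (1 / r).toReal := by
  by_cases hr : r = ⊤
  · subst hr
    simp only [one_div, ENNReal.inv_top, ENNReal.toReal_zero, Real.rpow_zero, mul_one]
    rcases isEmpty_or_nonempty (Fin n) with he | hne
    · rw [PiLp.norm_eq_ciSup]
      simpa using hc
    · rw [PiLp.norm_eq_ciSup]
      exact ciSup_le hv
  · have hp : 0 < r.toReal := ENNReal.toReal_pos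
      (by intro h0; exact absurd (h0 ▸ Fact.out : (1:ℝ≥0∞) ≤ 0) (by simp)) hr
    set p := r.toReal with hpdef
    have hexp : (1 / r).toReal = 1 / p := by
      rw [one_div, ENNReal.toReal_inv, one_div]
    rw [hexp, PiLp.norm_eq_sum hp]
    have hsum : ∑ i, ‖v i‖ ^ p ≤ (n : ℝ) * c ^ p := by
      calc ∑ i, ‖v i‖ ^ p ≤ ∑ _i : Fin n, c ^ p := by
            refine Finset.sum_le_sum fun i _ => ?_
            exact Real.rpow_le_rpow (norm_nonneg _) (hv i) hp.le
        _ = (n : ℝ) * c ^ p := by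
            rw [Finset.sum_const, Finset.card_univ, Fintype.card_fin, nsmul_eq_mul]
    calc (∑ i, ‖v i‖ ^ p) ^ (1 / p) ≤ ((n : ℝ) * c ^ p) ^ (1 / p) := by
          refine Real.rpow_le_rpow ?_ hsum (by positivity)
          exact Finset.sum_nonneg fun i _ => Real.rpow_nonneg (norm_nonneg _) _
      _ = c * (n : ℝ) ^ (1 / p) := by
          rw [Real.mul_rpow (by positivity) (Real.rpow_nonneg hc _),
            ← Real.rpow_mul hc, mul_one_div_cancel hp.ne', Real.rpow_one, mul_comm]

/-- The embedding of ZMod m^n into ℓ_r^n(ℂ). -/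
noncomputable def mcEmb (n m : ℕ) [NeZero m] (r : ℝ≥0∞) (s : ℝ) (x : Fin n → ZMod m) :
    PiLp r (fun _ : Fin n => ℂ) :=
  (WithLp.equiv r (Fin n → ℂ)).symm (fun j => (s : ℂ) * mcChr m (x j))

lemma mcEmb_dist_half (n m : ℕ) [NeZero m] (hmeven : Even m) (r : ℝ≥0∞) [Fact (1 ≤ r)]
    (s : ℝ) (hs : 0 < s) (x : Fin n → ZMod m) (j : Fin n) :
    dist (mcEmb n m r s (x + fun i => if i = j then ((m / 2 : ℕ) : ZMod m) else 0))
      (mcEmb n m r s x) = 2 * s := by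
  rw [dist_eq_norm]
  have hdiff : mcEmb n m r s (x + fun i => if i = j then ((m / 2 : ℕ) : ZMod m) else 0)
      - mcEmb n m r s x
      = (WithLp.equiv r (Fin n → ℂ)).symm
          (Pi.single j (((-(2 * s) : ℝ) : ℂ) * mcChr m (x j))) := by
    unfold mcEmb
    rw [WithLp.equiv_symm_apply, ← WithLp.toLp_sub]
    congr 1
    funext i
    by_cases hij : i = j
    · subst hij
      simp only [Pi.sub_apply, Pi.add_apply, eq_self_iff_true, if_true, Pi.single_eq_same]
      rw [mcChr_add, mcChr_half m hmeven]
      push_cast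
      ring
    · simp only [Pi.sub_apply, Pi.add_apply, if_neg hij, add_zero,
        Pi.single_eq_of_ne hij, sub_self]
  rw [hdiff, WithLp.equiv_symm_apply, PiLp.norm_toLp_single, norm_mul, Complex.norm_real, Real.norm_eq_abs,
    abs_neg, abs_of_pos (by positivity), mcChr_abs, mul_one]

lemma mcEmb_dist_eps (n m : ℕ) [NeZero m] (r : ℝ≥0∞) [Fact (1 ≤ r)]
    (s : ℝ) (hs : 0 ≤ s) (x : Fin n → ZMod m) (ε : Fin n → Fin 3) :
    dist (mcEmb n m r s (x + fun i => (((ε i : ℤ) - 1 : ℤ) : ZMod m))) (mcEmb n m r s x)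
      ≤ (s * (2 * Real.pi / m)) * (n : ℝ) ^ (1 / r).toReal := by
  have hm : 0 < m := Nat.pos_of_ne_zero (NeZero.ne m)
  rw [dist_eq_norm]
  unfold mcEmb
  rw [WithLp.equiv_symm_apply, ← WithLp.toLp_sub]
  refine mc_pilp_norm_le r _ (s * (2 * Real.pi / m)) (by positivity) fun i => ?_
  rw [WithLp.ofLp_toLp]
  simp only [Pi.sub_apply, Pi.add_apply]
  rw [mcChr_add]
  have hfac : (s : ℂ) * (mcChr m (x i) * mcChr m (((ε i : ℤ) - 1 : ℤ) : ZMod m))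
      - (s : ℂ) * mcChr m (x i)
      = (s : ℂ) * mcChr m (x i) * (mcChr m (((ε i : ℤ) - 1 : ℤ) : ZMod m) - 1) := by ring
  rw [hfac, norm_mul, norm_mul, Complex.norm_real, Real.norm_eq_abs, abs_of_nonneg hs,
    mcChr_abs, mul_one]
  have hk : |((ε i : ℤ) - 1 : ℤ)| ≤ 1 := by
    have h2 : ((ε i : ℤ)) < 3 := by exact_mod_cast (ε i).isLt
    have h0 : (0:ℤ) ≤ (ε i : ℤ) := by positivity
    rw [abs_le]; omega
  exact mul_le_mul_of_nonneg_left (mcChr_bound m _ hk) hs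

/-- If the even integer m witnesses metric cotype q with constant Γ in dimension n for M,
then for every f : ℓ_rⁿ(ℂ) → M and every s > 0,
n^{1/q} ρ̄_f(2s) ≤ Γ m ω_f(2πs n^{1/r} / m). -/
theorem metric_cotype_compression_bound
    {M : Type*} [MetricSpace M] (n : ℕ) (q Γ : ℝ) (hq : 0 < q) (hΓ : 0 < Γ)
    (r : ℝ≥0∞) [Fact (1 ≤ r)]
    (m : ℕ) [NeZero m] (hmpos : 0 < m) (hmeven : Even m)
    (hm : ∀ g : (Fin n → ZMod m) → M,
      ∑ j : Fin n, ((m : ℝ) ^ n)⁻¹ *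
          ∑ x : Fin n → ZMod m,
            dist (g (x + fun i => if i = j then ((m / 2 : ℕ) : ZMod m) else 0)) (g x) ^ q
        ≤ Γ ^ q * (m : ℝ) ^ q * (((3 : ℝ) ^ n)⁻¹ * ((m : ℝ) ^ n)⁻¹ *
            ∑ ε : Fin n → Fin 3, ∑ x : Fin n → ZMod m,
              dist (g (x + fun i => (((ε i : ℤ) - 1 : ℤ) : ZMod m))) (g x) ^ q))
    (f : PiLp r (fun _ : Fin n => ℂ) → M) (s : ℝ) (hs : 0 < s) :
    (n : ℝ≥0∞) ^ (1 / q) * eRhoBar f (2 * s)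
      ≤ ENNReal.ofReal Γ * (m : ℝ≥0∞) *
        eOmega f (2 * Real.pi * s * (n : ℝ) ^ (1 / r).toReal / (m : ℝ)) := by
  set t : ℝ := 2 * Real.pi * s * (n : ℝ) ^ (1 / r).toReal / (m : ℝ) with htdef
  by_cases hn : n = 0
  · subst hn
    rw [Nat.cast_zero, ENNReal.zero_rpow_of_pos (by positivity), zero_mul]
    exact zero_le
  by_cases hWtop : eOmega f t = ⊤
  · rw [hWtop, ENNReal.mul_top (by simp [hΓ, NeZero.ne m, ENNReal.ofReal_eq_zero, not_le])]
    exact le_top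
  -- main case
  have hnpos : 0 < n := Nat.pos_of_ne_zero hn
  have hmR : (0:ℝ) < (m : ℝ) := by exact_mod_cast hmpos
  set W : ℝ := (eOmega f t).toReal with hWdef
  have hWnn : 0 ≤ W := ENNReal.toReal_nonneg
  have hWle : ∀ x y : PiLp r (fun _ : Fin n => ℂ), dist x y ≤ t → dist (f x) (f y) ≤ W := by
    intro x y hxy
    have h1 : edist (f x) (f y) ≤ eOmega f t :=
      le_iSup₂_of_le x y (le_iSup_of_le hxy le_rfl)
    rw [dist_edist]
    exact ENNReal.toReal_mono hWtop h1
  have factB : ∀ (x : Fin n → ZMod m) (ε : Fin n → Fin 3),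
      dist (mcEmb n m r s (x + fun i => (((ε i : ℤ) - 1 : ℤ) : ZMod m))) (mcEmb n m r s x)
        ≤ t := by
    intro x ε
    refine (mcEmb_dist_eps n m r s hs.le x ε).trans_eq ?_
    rw [htdef]; ring
  have hPle : ∀ (x : Fin n → ZMod m) (j : Fin n),
      eRhoBar f (2 * s) ≤
        edist (f (mcEmb n m r s (x + fun i => if i = j then ((m / 2 : ℕ) : ZMod m) else 0)))
          (f (mcEmb n m r s x)) := by
    intro x j
    exact iInf₂_le_of_le _ _ (iInf_le_of_le (mcEmb_dist_half n m hmeven r s hs x j) le_rfl)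
  have hPtop : eRhoBar f (2 * s) ≠ ⊤ :=
    ne_top_of_le_ne_top (edist_ne_top _ _) (hPle 0 ⟨0, hnpos⟩)
  set ρ : ℝ := (eRhoBar f (2 * s)).toReal with hρdef
  have hρnn : 0 ≤ ρ := ENNReal.toReal_nonneg
  have hρle : ∀ (x : Fin n → ZMod m) (j : Fin n),
      ρ ≤ dist (f (mcEmb n m r s (x + fun i => if i = j then ((m / 2 : ℕ) : ZMod m) else 0)))
          (f (mcEmb n m r s x)) := by
    intro x j
    rw [dist_edist]
    exact ENNReal.toReal_mono (edist_ne_top _ _) (hPle x j)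
  have hg := hm (fun z => f (mcEmb n m r s z))
  have hcardZ : (Fintype.card (Fin n → ZMod m) : ℝ) = (m : ℝ) ^ n := by
    simp [Fintype.card_fun, ZMod.card]
  have hcardE : (Fintype.card (Fin n → Fin 3) : ℝ) = (3 : ℝ) ^ n := by
    simp [Fintype.card_fun]
  have key : (n : ℝ) * ρ ^ q ≤ Γ ^ q * (m : ℝ) ^ q * W ^ q := by
    have hmn : (0:ℝ) < (m:ℝ) ^ n := by positivity
    have hL : (n : ℝ) * ρ ^ q ≤ ∑ j : Fin n, ((m : ℝ) ^ n)⁻¹ *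
        ∑ x : Fin n → ZMod m,
          dist (f (mcEmb n m r s (x + fun i => if i = j then ((m / 2 : ℕ) : ZMod m) else 0)))
            (f (mcEmb n m r s x)) ^ q := by
      have hper : ∀ j : Fin n, ρ ^ q ≤ ((m : ℝ) ^ n)⁻¹ *
          ∑ x : Fin n → ZMod m,
            dist (f (mcEmb n m r s (x + fun i => if i = j then ((m / 2 : ℕ) : ZMod m) else 0)))
              (f (mcEmb n m r s x)) ^ q := by
        intro j
        have hsum : (m:ℝ) ^ n * ρ ^ q ≤ ∑ x : Fin n → ZMod m,
            dist (f (mcEmb n m r s (x + fun i => if i = j then ((m / 2 : ℕ) : ZMod m) else 0)))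
              (f (mcEmb n m r s x)) ^ q := by
          calc (m:ℝ) ^ n * ρ ^ q = ∑ _x : Fin n → ZMod m, ρ ^ q := by
                rw [Finset.sum_const, Finset.card_univ, nsmul_eq_mul, hcardZ]
            _ ≤ _ := Finset.sum_le_sum fun x _ =>
                Real.rpow_le_rpow hρnn (hρle x j) hq.le
        calc ρ ^ q = ((m:ℝ) ^ n)⁻¹ * ((m:ℝ) ^ n * ρ ^ q) := by field_simp
          _ ≤ _ := mul_le_mul_of_nonneg_left hsum (inv_nonneg.mpr hmn.le)
      calc (n : ℝ) * ρ ^ q = ∑ _j : Fin n, ρ ^ q := by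
            rw [Finset.sum_const, Finset.card_univ, Fintype.card_fin, nsmul_eq_mul]
        _ ≤ _ := Finset.sum_le_sum fun j _ => hper j
    have hR : ((3 : ℝ) ^ n)⁻¹ * ((m : ℝ) ^ n)⁻¹ *
        ∑ ε : Fin n → Fin 3, ∑ x : Fin n → ZMod m,
          dist (f (mcEmb n m r s (x + fun i => (((ε i : ℤ) - 1 : ℤ) : ZMod m))))
            (f (mcEmb n m r s x)) ^ q ≤ W ^ q := by
      have h3n : (0:ℝ) < (3:ℝ) ^ n := by positivity
      have hsum : ∑ ε : Fin n → Fin 3, ∑ x : Fin n → ZMod m,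
          dist (f (mcEmb n m r s (x + fun i => (((ε i : ℤ) - 1 : ℤ) : ZMod m))))
            (f (mcEmb n m r s x)) ^ q ≤ (3:ℝ) ^ n * ((m:ℝ) ^ n * W ^ q) := by
        calc _ ≤ ∑ _ε : Fin n → Fin 3, ∑ _x : Fin n → ZMod m, W ^ q := by
              refine Finset.sum_le_sum fun ε _ => Finset.sum_le_sum fun x _ => ?_
              exact Real.rpow_le_rpow dist_nonneg (hWle _ _ (factB x ε)) hq.le
          _ = (3:ℝ) ^ n * ((m:ℝ) ^ n * W ^ q) := by
              rw [Finset.sum_const, Finset.sum_const, Finset.card_univ, Finset.card_univ,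
                nsmul_eq_mul, nsmul_eq_mul, hcardZ, hcardE]
        
      calc ((3 : ℝ) ^ n)⁻¹ * ((m : ℝ) ^ n)⁻¹ * _
            ≤ ((3 : ℝ) ^ n)⁻¹ * ((m : ℝ) ^ n)⁻¹ * ((3:ℝ) ^ n * ((m:ℝ) ^ n * W ^ q)) :=
          mul_le_mul_of_nonneg_left hsum (by positivity)
        _ = W ^ q := by field_simp
    calc (n : ℝ) * ρ ^ q ≤ _ := hL
      _ ≤ _ := hg
      _ ≤ Γ ^ q * (m : ℝ) ^ q * W ^ q :=
          mul_le_mul_of_nonneg_left hR (by positivity)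
  have final : (n : ℝ) ^ (1 / q) * ρ ≤ Γ * (m : ℝ) * W := by
    have hΓmW : (0:ℝ) ≤ Γ * (m : ℝ) * W := by positivity
    have h1 : (n : ℝ) * ρ ^ q ≤ (Γ * (m : ℝ) * W) ^ q := by
      rw [Real.mul_rpow (by positivity) hWnn, Real.mul_rpow hΓ.le hmR.le]
      exact key
    have h2 := Real.rpow_le_rpow (by positivity) h1 (by positivity : (0:ℝ) ≤ 1 / q)
    rw [Real.mul_rpow (Nat.cast_nonneg n) (Real.rpow_nonneg hρnn q),
      ← Real.rpow_mul hρnn, ← Real.rpow_mul hΓmW, mul_one_div_cancel hq.ne'] at h2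
    simpa using h2
  calc (n : ℝ≥0∞) ^ (1 / q) * eRhoBar f (2 * s)
      = ENNReal.ofReal ((n : ℝ) ^ (1 / q) * ρ) := by
        rw [← ENNReal.ofReal_natCast n,
          ENNReal.ofReal_rpow_of_pos (by exact_mod_cast hnpos : (0:ℝ) < (n:ℝ)),
          ← ENNReal.ofReal_toReal hPtop,
          ← ENNReal.ofReal_mul (Real.rpow_nonneg (Nat.cast_nonneg n) _)]
    _ ≤ ENNReal.ofReal (Γ * (m : ℝ) * W) := ENNReal.ofReal_le_ofReal final
    _ = ENNReal.ofReal Γ * (m : ℝ≥0∞) * eOmega f t := by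
        rw [ENNReal.ofReal_mul (mul_nonneg hΓ.le hmR.le), ENNReal.ofReal_mul hΓ.le,
          ENNReal.ofReal_natCast, hWdef, ENNReal.ofReal_toReal hWtop]
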